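/- Under the assumption d² = q^l with l ≥ 1 an integer and a = d q^α, the function g_γ = q^{γ(l+α-1)} / ((q^{γ+1}; q)_{l+α-1} (bc q^γ; q)_{l+α-1}), viewed as a rational function of t = q^γ, is invariant under the involution t ↦ q^{1-α-l}/(bc t). -/

import Mathlib

open Finset

lemma prod_zpow_eq (x : ℂ) (hx : x ≠ 0) (n : ℕ) (f : ℕ → ℤ) :
    ∏ i ∈ range n, x ^ f i = x ^ (∑ i ∈ range n, f i) := by
  induction n with
  | zero => simp
  | succ n ih => rw [prod_range_succ, sum_range_succ, ih, zpow_add₀ hx]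

lemma sum_odd_sq (n : ℕ) : ∑ i ∈ range n, -(2 * (i:ℤ) + 1) = -(n:ℤ)^2 := by
  induction n with
  | zero => simp
  | succ n ih => rw [sum_range_succ, ih]; push_cast; ring

theorem g_gamma_invariant
    (q : ℝ) (hq : 0 < q) (hq1 : q < 1)
    (a b c d : ℂ) (hb : b ≠ 0) (hc : c ≠ 0)
    (α l : ℕ) (hα : 1 ≤ α) (hl : 1 ≤ l)
    (hd : d ^ 2 = (q : ℂ) ^ l) (ha : a = d * (q : ℂ) ^ α)
    (g : ℂ → ℂ)
    (hg : ∀ t : ℂ, g t = t ^ (l + α - 1) /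
      ((∏ i ∈ Finset.range (l + α - 1), (1 - t * (q:ℂ)^(i+1))) *
       (∏ i ∈ Finset.range (l + α - 1), (1 - b*c*t*(q:ℂ)^i)))) :
    ∀ t : ℂ, t ≠ 0 →
      ((∏ i ∈ Finset.range (l + α - 1), (1 - t * (q:ℂ)^(i+1))) *
       (∏ i ∈ Finset.range (l + α - 1), (1 - b*c*t*(q:ℂ)^i))) ≠ 0 →
      ((∏ i ∈ Finset.range (l + α - 1),
          (1 - ((q:ℂ)^((1:ℤ) - (α:ℤ) - (l:ℤ))/(b*c*t)) * (q:ℂ)^(i+1))) *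
       (∏ i ∈ Finset.range (l + α - 1),
          (1 - b*c*((q:ℂ)^((1:ℤ) - (α:ℤ) - (l:ℤ))/(b*c*t))*(q:ℂ)^i))) ≠ 0 →
      g ((q:ℂ)^((1:ℤ) - (α:ℤ) - (l:ℤ)) / (b*c*t)) = g t := by
  intro t ht hDt hDs
  have hq0 : (q:ℂ) ≠ 0 := by
    simpa using Complex.ofReal_ne_zero.mpr (ne_of_gt hq)
  set N := l + α - 1 with hNdef
  have hexp : (1:ℤ) - (α:ℤ) - (l:ℤ) = -(N:ℤ) := by omega
  rw [hexp] at hDs ⊢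
  set s : ℂ := (q:ℂ)^(-(N:ℤ)) / (b*c*t) with hs
  rw [hg, hg, div_eq_div_iff hDs hDt]
  rw [← prod_range_reflect (fun i => (1 - s * (q:ℂ)^(i+1))) N,
      ← prod_range_reflect (fun i => (1 - b*c*s*(q:ℂ)^i)) N]
  have hbct : b*c*t ≠ 0 := mul_ne_zero (mul_ne_zero hb hc) ht
  have key : ∀ i ∈ range N,
      t * ((1 - s * (q:ℂ)^((N - 1 - i)+1)) * (1 - b*c*s*(q:ℂ)^(N - 1 - i)))
      = (q:ℂ)^(-(2*(i:ℤ)+1)) *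
        ((1 - t * (q:ℂ)^(i+1)) * (1 - b*c*t*(q:ℂ)^i) / (b*c*t)) := by
    intro i hi
    have hiN : i < N := mem_range.mp hi
    have e1 : ((q:ℂ))^((N - 1 - i)+1) = (q:ℂ)^((N:ℤ) - i) := by
      rw [← zpow_natCast]; congr 1; omega
    have e2 : ((q:ℂ))^(N - 1 - i : ℕ) = (q:ℂ)^((N:ℤ) - 1 - i) := by
      rw [← zpow_natCast]; congr 1; omega
    have eA : s * (q:ℂ)^((N:ℤ) - (i:ℤ)) = ((q:ℂ)^(i:ℕ))⁻¹ / (b*c*t) := by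
      rw [hs, div_mul_eq_mul_div, ← zpow_add₀ hq0,
        show -(N:ℤ) + ((N:ℤ) - i) = -(i:ℤ) by ring, zpow_neg, zpow_natCast]
    have h3 : b*c*s = (q:ℂ)^(-(N:ℤ))/t := by
      rw [hs]; field_simp
    have eB : b*c*s*(q:ℂ)^((N:ℤ) - 1 - (i:ℤ)) = ((q:ℂ)^(i+1:ℕ))⁻¹ / t := by
      rw [h3, div_mul_eq_mul_div, ← zpow_add₀ hq0,
        show -(N:ℤ) + ((N:ℤ) - 1 - i) = -((i:ℤ)+1) by ring, zpow_neg]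
      norm_cast
    have hq2 : (q:ℂ)^(-(2*(i:ℤ)+1)) = ((q:ℂ)^(i:ℕ) * (q:ℂ)^(i+1:ℕ))⁻¹ := by
      rw [← pow_add, ← zpow_natCast (q:ℂ) (i + (i+1)), ← zpow_neg]
      congr 1; push_cast; ring
    have hpi : (q:ℂ)^(i:ℕ) ≠ 0 := pow_ne_zero _ hq0
    have hpi1 : (q:ℂ)^(i+1:ℕ) ≠ 0 := pow_ne_zero _ hq0
    rw [e1, e2, eA, eB, hq2]
    field_simp
    ring
  have key2 : ∀ i ∈ range N,
      s * ((1 - t * (q:ℂ)^(i+1)) * (1 - b*c*t*(q:ℂ)^i))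
      = (q:ℂ)^(-(N:ℤ)) *
        ((1 - t * (q:ℂ)^(i+1)) * (1 - b*c*t*(q:ℂ)^i) / (b*c*t)) := by
    intro i _; rw [hs]; ring
  calc s ^ N * ((∏ i ∈ range N, (1 - t * (q:ℂ)^(i+1))) *
          ∏ i ∈ range N, (1 - b*c*t*(q:ℂ)^i))
      = ∏ i ∈ range N, (s * ((1 - t * (q:ℂ)^(i+1)) * (1 - b*c*t*(q:ℂ)^i))) := by
        rw [prod_mul_distrib, prod_mul_distrib, prod_const, card_range]
    _ = ∏ i ∈ range N, ((q:ℂ)^(-(N:ℤ)) *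
          ((1 - t * (q:ℂ)^(i+1)) * (1 - b*c*t*(q:ℂ)^i) / (b*c*t))) :=
        prod_congr rfl key2
    _ = (∏ i ∈ range N, (q:ℂ)^(-(N:ℤ))) *
          ∏ i ∈ range N, ((1 - t * (q:ℂ)^(i+1)) * (1 - b*c*t*(q:ℂ)^i) / (b*c*t)) := by
        rw [prod_mul_distrib]
    _ = (∏ i ∈ range N, (q:ℂ)^(-(2*(i:ℤ)+1))) *
          ∏ i ∈ range N, ((1 - t * (q:ℂ)^(i+1)) * (1 - b*c*t*(q:ℂ)^i) / (b*c*t)) := by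
        congr 1
        rw [prod_zpow_eq _ hq0, prod_zpow_eq _ hq0]
        congr 1
        rw [sum_const, card_range]
        rw [sum_odd_sq]; push_cast; ring
    _ = ∏ i ∈ range N, ((q:ℂ)^(-(2*(i:ℤ)+1)) *
          ((1 - t * (q:ℂ)^(i+1)) * (1 - b*c*t*(q:ℂ)^i) / (b*c*t))) := by
        rw [prod_mul_distrib]
    _ = ∏ i ∈ range N,
          (t * ((1 - s * (q:ℂ)^((N - 1 - i)+1)) * (1 - b*c*s*(q:ℂ)^(N - 1 - i)))) :=
        (prod_congr rfl key).symm
    _ = t ^ N * ((∏ i ∈ range N, (1 - s * (q:ℂ)^((N - 1 - i)+1))) *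
          ∏ i ∈ range N, (1 - b*c*s*(q:ℂ)^(N - 1 - i))) := by
        rw [prod_mul_distrib, prod_mul_distrib, prod_const, card_range]
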